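/- Let A be the minimal DFA accepting Paths(N) for a sound deterministic negotiation N, and N_A the negotiation constructed from A (states become nodes, dnode(s) = dom(a) when some a_p ∈ out(s), δ(s,a,p) = δ_A(s,a_p)). Then L(N) ⊆ L(N_A). -/

import Mathlib

universe u v w

variable {P : Type u} {A : Type v}

/-- One swap of two adjacent independent letters. -/
def SwapStep (dom : A → Set P) (u v : List A) : Prop :=
  ∃ x y : List A, ∃ a b : A, dom a ∩ dom b = ∅ ∧
    u = x ++ a :: b :: y ∧ v = x ++ b :: a :: y

/-- Mazurkiewicz trace equivalence: reflexive-transitive-symmetric closure of swaps. -/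
def TraceEq (dom : A → Set P) : List A → List A → Prop :=
  Relation.EqvGen (SwapStep dom)

open Classical in
/-- Projection of a word on a process `p`: keep letters whose domain contains `p`. -/
noncomputable def proj (dom : A → Set P) (p : P) : List A → List A
  | [] => []
  | a :: w => if p ∈ dom a then a :: proj dom p w else proj dom p w

/-- A word `t` is co-prime with minimal letter `b` if every trace-equivalent word starts with `b`. -/
def CoPrime (dom : A → Set P) (t : List A) (b : A) : Prop :=
  ∀ v, TraceEq dom t v → ∃ v', v = b :: v'

/-- A `(b,p)`-step: `s = b·s'` is co-prime with minimal letter `b`, `p ∈ dom b`,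
and `b` is the only letter of `s` involving `p`. -/
def IsStep (dom : A → Set P) (s : List A) (b : A) (p : P) : Prop :=
  p ∈ dom b ∧ CoPrime dom s b ∧ ∃ s', s = b :: s' ∧ ∀ a ∈ s', p ∉ dom a

/-- A (deterministic) negotiation diagram. -/
structure Negotiation (P : Type u) (A : Type v) where
  Node : Type w
  dnode : Node → Set P
  ninit : Node
  nfin : Node
  tr : Node → A → P → Option Node

namespace Negotiation

/-- Well-formedness conditions of a negotiation diagram over distributed alphabet `dom`. -/
def WellFormed (N : Negotiation P A) (dom : A → Set P) : Prop :=
  (∀ n, (N.dnode n).Nonempty) ∧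
  N.dnode N.ninit = Set.univ ∧
  N.dnode N.nfin = Set.univ ∧
  (∀ n a p n', N.tr n a p = some n' →
    N.dnode n = dom a ∧ p ∈ dom a ∧ p ∈ N.dnode n' ∧
    ∀ q ∈ dom a, (N.tr n a q).isSome)

/-- Node `n` is enabled in configuration `C`. -/
def Enabled (N : Negotiation P A) (n : N.Node) (C : P → N.Node) : Prop :=
  ∀ p ∈ N.dnode n, C p = n

/-- `n` is the unique node enabled in `C`. -/
def UniqueEnabled (N : Negotiation P A) (n : N.Node) (C : P → N.Node) : Prop :=
  N.Enabled n C ∧ ∀ m, N.Enabled m C → m = n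

/-- A step of a negotiation on action `a` between configurations. -/
def Step (N : Negotiation P A) (dom : A → Set P) (C : P → N.Node) (a : A)
    (C' : P → N.Node) : Prop :=
  ∃ n, N.Enabled n C ∧ (∀ p ∈ dom a, N.tr n a p = some (C' p)) ∧
    ∀ p, p ∉ dom a → C' p = C p

/-- Execution of a word between configurations. -/
def Run (N : Negotiation P A) (dom : A → Set P) :
    (P → N.Node) → List A → (P → N.Node) → Prop
  | C, [], C' => C = C'
  | C, a :: word, C'' => ∃ C', N.Step dom C a C' ∧ N.Run dom C' word C''

/-- The initial configuration: all processes in the initial node. -/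
def Cinit (N : Negotiation P A) : P → N.Node := fun _ => N.ninit

/-- The final configuration: all processes in the final node. -/
def Cfin (N : Negotiation P A) : P → N.Node := fun _ => N.nfin

/-- The language of successful executions of `N`. -/
def Lang (N : Negotiation P A) (dom : A → Set P) (word : List A) : Prop :=
  N.Run dom N.Cinit word N.Cfin

/-- Soundness: every execution from the initial configuration extends to a successful one. -/
def Sound (N : Negotiation P A) (dom : A → Set P) : Prop :=
  ∀ word C, N.Run dom N.Cinit word C → ∃ v, N.Run dom C v N.Cfin

/-- A local path of process `p` in the graph of `N`. -/
def PPath (N : Negotiation P A) (p : P) : N.Node → List A → N.Node → Prop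
  | n, [], n' => n = n'
  | n, a :: word, n'' => ∃ n', N.tr n a p = some n' ∧ N.PPath p n' word n''

/-- A local path in the graph of `N`, labelled over the alphabet `A_dom` of pairs `(a,p)`. -/
def GPath (N : Negotiation P A) : N.Node → List (A × P) → N.Node → Prop
  | n, [], n' => n = n'
  | n, x :: word, n'' => ∃ n', N.tr n x.1 x.2 = some n' ∧ N.GPath n' word n''

/-- `Paths(N)`: labels of local paths from the initial to the final node. -/
def PathsL (N : Negotiation P A) : Set (List (A × P)) :=
  { w | N.GPath N.ninit w N.nfin }

end Negotiation

/-- A DFA with a partial transition function and a single final state. -/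
structure PDFA (B : Type v) where
  S : Type w
  init : S
  trd : S → B → Option S
  fin : S

/-- Run of a partial DFA on a word. -/
def DRun (D : PDFA B) : D.S → List B → D.S → Prop
  | s, [], s' => s = s'
  | s, x :: word, s'' => ∃ s', D.trd s x = some s' ∧ DRun D s' word s''

/-- Acceptance from a state. -/
def AccFrom (D : PDFA B) (s : D.S) (word : List B) : Prop := DRun D s word D.fin

/-- Acceptance of the DFA. -/
def Accepts (D : PDFA B) (word : List B) : Prop := AccFrom D D.init word

/-- Trimmed: every state reachable and co-reachable. -/
def Trimmed (D : PDFA B) : Prop :=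
  ∀ s, (∃ word, DRun D D.init word s) ∧ (∃ word, DRun D s word D.fin)

/-- `D` is (a copy of) the minimal DFA of `L`: it accepts `L`, is trimmed,
and states with equal residual languages are equal (Myhill–Nerode). -/
def PDFAMinimalFor (D : PDFA B) (L : Set (List B)) : Prop :=
  (∀ word, Accepts D word ↔ word ∈ L) ∧ Trimmed D ∧
  ∀ s s', (∀ word, AccFrom D s word ↔ AccFrom D s' word) → s = s'

open Classical in
/-- The negotiation `N_A` associated with a dom-complete DFA over the alphabet `A × P`:
states become nodes, `dnode s = dom a` when some `(a,p)` is outgoing from `s`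
(and `Proc` otherwise, in particular at the final state), and transitions are inherited. -/
noncomputable def negOfDFA (dom : A → Set P) (D : PDFA (A × P)) : Negotiation P A where
  Node := D.S
  dnode := fun s =>
    if h : ∃ x : A × P, (D.trd s x).isSome then dom h.choose.1 else Set.univ
  ninit := D.init
  nfin := D.fin
  tr := fun s a p => D.trd s (a, p)

section Aux

variable {B : Type v}

theorem aux_proj_append (dom : A → Set P) (p : P) (u v : List A) :
    proj dom p (u ++ v) = proj dom p u ++ proj dom p v := by
  induction u with
  | nil => rfl
  | cons a u ih =>
    by_cases h : p ∈ dom a <;> simp [proj, h, ih]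

theorem aux_DRun_append (D : PDFA B) {s s' s'' : D.S} {u v : List B}
    (h1 : DRun D s u s') (h2 : DRun D s' v s'') : DRun D s (u ++ v) s'' := by
  induction u generalizing s with
  | nil => cases h1; exact h2
  | cons x u ih =>
    obtain ⟨t, ht, hr⟩ := h1
    exact ⟨t, ht, ih hr⟩

theorem aux_DRun_split (D : PDFA B) {s s'' : D.S} {u v : List B}
    (h : DRun D s (u ++ v) s'') : ∃ s', DRun D s u s' ∧ DRun D s' v s'' := by
  induction u generalizing s with
  | nil => exact ⟨s, rfl, h⟩
  | cons x u ih =>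
    obtain ⟨t, ht, hr⟩ := h
    obtain ⟨s', h1, h2⟩ := ih hr
    exact ⟨s', ⟨t, ht, h1⟩, h2⟩

theorem aux_DRun_det (D : PDFA B) {s s₁ s₂ : D.S} {u : List B}
    (h1 : DRun D s u s₁) (h2 : DRun D s u s₂) : s₁ = s₂ := by
  induction u generalizing s with
  | nil => cases h1; cases h2; rfl
  | cons x u ih =>
    obtain ⟨t, ht, hr⟩ := h1
    obtain ⟨t', ht', hr'⟩ := h2
    rw [ht, Option.some_inj] at ht'
    exact ih hr (ht'.symm ▸ hr')

theorem aux_GPath_append (N : Negotiation P A) {n m k : N.Node} {u v : List (A × P)}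
    (h1 : N.GPath n u m) (h2 : N.GPath m v k) : N.GPath n (u ++ v) k := by
  induction u generalizing n with
  | nil => cases h1; exact h2
  | cons x u ih =>
    obtain ⟨t, ht, hr⟩ := h1
    exact ⟨t, ht, ih hr⟩

theorem aux_GPath_split (N : Negotiation P A) {n k : N.Node} {u v : List (A × P)}
    (h : N.GPath n (u ++ v) k) : ∃ m, N.GPath n u m ∧ N.GPath m v k := by
  induction u generalizing n with
  | nil => exact ⟨n, rfl, h⟩
  | cons x u ih =>
    obtain ⟨t, ht, hr⟩ := h
    obtain ⟨m, h1, h2⟩ := ih hr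
    exact ⟨m, ⟨t, ht, h1⟩, h2⟩

theorem aux_GPath_det (N : Negotiation P A) {n m m' : N.Node} {u : List (A × P)}
    (h1 : N.GPath n u m) (h2 : N.GPath n u m') : m = m' := by
  induction u generalizing n with
  | nil => cases h1; cases h2; rfl
  | cons x u ih =>
    obtain ⟨t, ht, hr⟩ := h1
    obtain ⟨t', ht', hr'⟩ := h2
    rw [ht, Option.some_inj] at ht'
    exact ih hr (ht'.symm ▸ hr')

theorem aux_Run_append (N : Negotiation P A) (dom : A → Set P)
    {C C' C'' : P → N.Node} {u v : List A}
    (h1 : N.Run dom C u C') (h2 : N.Run dom C' v C'') : N.Run dom C (u ++ v) C'' := by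
  induction u generalizing C with
  | nil => cases h1; exact h2
  | cons a u ih =>
    obtain ⟨C₁, hst, hr⟩ := h1
    exact ⟨C₁, hst, ih hr⟩

/-- A run of `N` induces a local path for each process. -/
theorem aux_run_gpath (N : Negotiation P A) (dom : A → Set P) (hWF : N.WellFormed dom)
    {C C' : P → N.Node} {u : List A} (h : N.Run dom C u C') (p : P) :
    N.GPath (C p) ((proj dom p u).map (fun a => (a, p))) (C' p) := by
  induction u generalizing C with
  | nil => cases h; exact rfl
  | cons a u ih =>
    obtain ⟨C₁, ⟨n, hen, htr, hoth⟩, hrun⟩ := h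
    by_cases hp : p ∈ dom a
    · have ht := htr p hp
      have hd := (hWF.2.2.2 n a p _ ht).1
      have hCp : C p = n := hen p (by rw [hd]; exact hp)
      simp only [proj, if_pos hp, List.map_cons]
      exact ⟨C₁ p, by rw [hCp]; exact ht, ih hrun⟩
    · have hC : C₁ p = C p := hoth p hp
      simp only [proj, if_neg hp]
      rw [← hC]
      exact ih hrun

/-- Residual characterization: states of a minimal DFA for `Paths(N)` reached by the
projection of a run correspond to nodes of `N`. -/
theorem aux_residual (N : Negotiation P A) (D : PDFA (A × P)) (hmin : PDFAMinimalFor D N.PathsL)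
    {x : List (A × P)} {s : D.S} {n : N.Node}
    (hx : DRun D D.init x s) (hn : N.GPath N.ninit x n) (v : List (A × P)) :
    AccFrom D s v ↔ N.GPath n v N.nfin := by
  constructor
  · intro h
    have hacc : Accepts D (x ++ v) := aux_DRun_append D hx h
    have hmem : (x ++ v) ∈ N.PathsL := (hmin.1 _).mp hacc
    obtain ⟨m, h1, h2⟩ := aux_GPath_split N hmem
    rwa [aux_GPath_det N h1 hn] at h2
  · intro h
    have hmem : (x ++ v) ∈ N.PathsL := aux_GPath_append N hn h
    have hacc : Accepts D (x ++ v) := (hmin.1 _).mpr hmem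
    obtain ⟨t, h1, h2⟩ := aux_DRun_split D hacc
    rwa [aux_DRun_det D hx h1]

end Aux

/-- For the minimal DFA `D` of `Paths(N)` of a sound deterministic negotiation `N`,
every successful execution of `N` is a successful execution of `N_A`. -/
theorem lang_subset_negOfDFA [Finite P] [Finite A] (dom : A → Set P)
    (hdom : ∀ a, (dom a).Nonempty) (N : Negotiation P A) [Finite N.Node]
    (hWF : N.WellFormed dom)
    (hfin : ∀ a p, N.tr N.nfin a p = none)
    (hS : N.Sound dom)
    (D : PDFA (A × P)) (hmin : PDFAMinimalFor D N.PathsL) :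
    ∀ w, N.Lang dom w → (negOfDFA dom D).Lang dom w := by
  classical
  -- notation for tagged projections
  set π : P → List A → List (A × P) :=
    fun p u => (proj dom p u).map (fun a => (a, p)) with hπ
  -- the main invariant-based induction
  have main : ∀ (w u : List A) (C : P → N.Node) (σ : P → D.S),
      N.Run dom N.Cinit u C →
      (∀ p, DRun D D.init (π p u) (σ p)) →
      N.Run dom C w N.Cfin →
      (negOfDFA dom D).Run dom σ w (negOfDFA dom D).Cfin := by
    intro w
    induction w with
    | nil =>
      intro u C σ hu hσ hw
      cases hw
      have : σ = (negOfDFA dom D).Cfin := by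
        funext p
        have hg : N.GPath N.ninit (π p u) N.nfin := aux_run_gpath N dom hWF hu p
        have hacc : Accepts D (π p u) := (hmin.1 _).mpr hg
        exact aux_DRun_det D (hσ p) hacc
      exact this
    | cons a w ih =>
      intro u C σ hu hσ hw
      obtain ⟨C₁, hst, hw'⟩ := hw
      obtain ⟨n, hen, htr, hoth⟩ := hst
      obtain ⟨p₀, hp₀⟩ := hdom a
      have hdn : N.dnode n = dom a := (hWF.2.2.2 n a p₀ _ (htr p₀ hp₀)).1
      -- each process in dom a is at node n and its DFA state reads π q u to n
      have hCq : ∀ q ∈ dom a, C q = n := fun q hq => hen q (by rw [hdn]; exact hq)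
      have hGq : ∀ q ∈ dom a, N.GPath N.ninit (π q u) n := by
        intro q hq
        have := aux_run_gpath N dom hWF hu q
        rwa [hCq q hq] at this
      -- all these DFA states are equal (Myhill–Nerode)
      have hseq : ∀ q ∈ dom a, σ q = σ p₀ := by
        intro q hq
        exact hmin.2.2 _ _ (fun v =>
          (aux_residual N D hmin (hσ q) (hGq q hq) v).trans
          (aux_residual N D hmin (hσ p₀) (hGq p₀ hp₀) v).symm)
      set s := σ p₀ with hs
      -- by soundness, extend u ++ [a] to a full run, giving transitions in D
      have hrun1 : N.Run dom N.Cinit (u ++ [a]) C₁ :=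
        aux_Run_append N dom hu ⟨C₁, ⟨n, hen, htr, hoth⟩, rfl⟩
      obtain ⟨v, hv⟩ := hS _ _ hrun1
      have hfull : N.Run dom N.Cinit (u ++ a :: v) N.Cfin :=
        aux_Run_append N dom hu ⟨C₁, ⟨n, hen, htr, hoth⟩, hv⟩
      have hex : ∀ q, q ∈ dom a → ∃ s', D.trd s (a, q) = some s' := by
        intro q hq
        have hg : N.GPath N.ninit (π q (u ++ a :: v)) N.nfin :=
          aux_run_gpath N dom hWF hfull q
        have hπeq : π q (u ++ a :: v) = π q u ++ (a, q) :: π q v := by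
          simp only [hπ, aux_proj_append, proj, if_pos hq, List.map_append, List.map_cons]
        rw [hπeq] at hg
        have hacc : Accepts D (π q u ++ (a, q) :: π q v) := (hmin.1 _).mpr hg
        obtain ⟨t, h1, h2⟩ := aux_DRun_split D hacc
        have ht : t = s := (aux_DRun_det D (hσ q) h1).symm.trans (hseq q hq)
        obtain ⟨s', hs', _⟩ := h2
        exact ⟨s', by rw [← ht]; exact hs'⟩
      choose f hf using hex
      set σ' : P → D.S := fun q => if h : q ∈ dom a then f q h else σ q with hσ'
      -- the domain of node s in N_A is dom a
      have hdnA : (negOfDFA dom D).dnode s = dom a := by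
        have hout : ∃ x : A × P, (D.trd s x).isSome := ⟨(a, p₀), by rw [hf p₀ hp₀]; rfl⟩
        show (if h : ∃ x : A × P, (D.trd s x).isSome then dom h.choose.1 else Set.univ) = dom a
        rw [dif_pos hout]
        obtain ⟨t, ht⟩ := Option.isSome_iff_exists.mp hout.choose_spec
        obtain ⟨y, hy⟩ := (hmin.2.1 t).2
        have hall : DRun D D.init (π p₀ u ++ hout.choose :: y) D.fin :=
          aux_DRun_append D (hσ p₀) ⟨t, ht, hy⟩
        have hmem : (π p₀ u ++ hout.choose :: y) ∈ N.PathsL := (hmin.1 _).mp hall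
        obtain ⟨m, h1, h2⟩ := aux_GPath_split N hmem
        have hm : m = n := aux_GPath_det N h1 (hGq p₀ hp₀)
        obtain ⟨m', hm', _⟩ := h2
        rw [hm] at hm'
        rw [← (hWF.2.2.2 n _ _ _ hm').1, hdn]
      refine ⟨σ', ⟨s, ?_, ?_, ?_⟩, ?_⟩
      · -- Enabled
        intro q hq
        rw [hdnA] at hq
        exact hseq q hq
      · -- transitions
        intro q hq
        show D.trd s (a, q) = some (σ' q)
        rw [hσ']
        simp only [dif_pos hq]
        exact hf q hq
      · -- untouched processes
        intro q hq
        rw [hσ']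
        simp only [dif_neg hq]
        rfl
      · -- inductive step
        refine ih (u ++ [a]) C₁ σ' hrun1 ?_ hw'
        intro q
        by_cases hq : q ∈ dom a
        · have hπeq : π q (u ++ [a]) = π q u ++ [(a, q)] := by
            simp only [hπ, aux_proj_append, proj, if_pos hq, List.map_append, List.map_cons,
              List.map_nil]
          have hstep : DRun D s [(a, q)] (f q hq) := ⟨f q hq, hf q hq, rfl⟩
          have hmid : DRun D D.init (π q u) s := by
            rw [← hseq q hq]; exact hσ q
          have : DRun D D.init (π q u ++ [(a, q)]) (f q hq) := aux_DRun_append D hmid hstep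
          rw [hπeq, hσ']
          simp only [dif_pos hq]
          exact this
        · have hπeq : π q (u ++ [a]) = π q u := by
            simp only [hπ, aux_proj_append, proj, if_neg hq, List.map_append, List.map_nil,
              List.append_nil]
          rw [hπeq, hσ']
          simp only [dif_neg hq]
          exact hσ q
  intro w hw
  exact main w [] N.Cinit (fun _ => D.init) rfl (fun p => rfl) hw
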